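/- arXiv:2304.13452 — 3 statements merged into one kernel-verified Lean document; each statement's English description precedes it below -/
import Mathlib

section
/- Consider a commutative diagram of finitely generated ℤ_p-modules with exact rows 0 → A′ → A → A″ → 0 and 0 → B′ → B → B″ → 0, and vertical ℤ_p-linear maps f′ : A′ → B′, f : A → B, f″ : A″ → B″ making both squares commute. If any two of the maps f′, f, f″ have finite kernel and finite cokernel, then so does the third, and in that case (len(ker f) − len(coker f) + rank_{ℤ_p} B) = (len(ker f′) − len(coker f′) + rank_{ℤ_p} B′) + (len(ker f″) − len(coker f″) + rank_{ℤ_p} B″). In particular, the Kobayashi rank is additive in short exact sequences of inverse systems: ∇N_n = ∇N′_n + ∇N″_n. -/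
open LinearMap


section General

variable {R M N : Type*} [Ring R] [AddCommGroup M] [AddCommGroup N]
  [Module R M] [Module R N]

/-- A module decomposes set-theoretically as quotient × submodule. -/
noncomputable def quotProdEquiv (S : Submodule R M) : M ≃ (M ⧸ S) × S := by
  have hsur := Submodule.Quotient.mk_surjective S
  classical
  let g : (M ⧸ S) → M := fun q => (hsur q).choose
  have hg : ∀ q, Submodule.Quotient.mk (g q) = q := fun q => (hsur q).choose_spec
  have hmem : ∀ x : M, x - g (Submodule.Quotient.mk x) ∈ S := by
    intro x
    rw [← Submodule.Quotient.eq]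
    exact (hg _).symm
  refine
    { toFun := fun x => (Submodule.Quotient.mk x, ⟨x - g (Submodule.Quotient.mk x), hmem x⟩)
      invFun := fun qs => g qs.1 + qs.2
      left_inv := ?_
      right_inv := ?_ }
  · intro x; simp
  · rintro ⟨q, s, hs⟩
    have hmk : (Submodule.Quotient.mk (g q + s) : M ⧸ S) = q := by
      rw [Submodule.Quotient.mk_add, hg, (Submodule.Quotient.mk_eq_zero S).mpr hs, add_zero]
    refine Prod.ext ?_ ?_
    · simpa using hmk
    · apply Subtype.ext
      simp only
      rw [hmk]
      abel

lemma card_quot_mul (S : Submodule R M) :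
    Nat.card M = Nat.card (M ⧸ S) * Nat.card S := by
  rw [Nat.card_congr (quotProdEquiv S), Nat.card_prod]

lemma finite_of_quot (S : Submodule R M) [Finite (M ⧸ S)] [Finite S] : Finite M :=
  Finite.of_equiv _ (quotProdEquiv S).symm

lemma card_ker_mul_card_range (g : M →ₗ[R] N) :
    Nat.card M = Nat.card (ker g) * Nat.card (range g) := by
  rw [card_quot_mul (ker g), Nat.card_congr g.quotKerEquivRange.toEquiv, mul_comm]

lemma finite_range_of_finite (g : M →ₗ[R] N) [Finite M] : Finite (range g) :=
  Finite.of_surjective _ g.surjective_rangeRestrict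

lemma finite_of_finite_ker_range (g : M →ₗ[R] N) [h1 : Finite (ker g)]
    [h2 : Finite (range g)] : Finite M := by
  have : Finite (M ⧸ ker g) := Finite.of_equiv _ g.quotKerEquivRange.toEquiv.symm
  exact finite_of_quot (ker g)

end General

section Padic

variable {p : ℕ} [Fact p.Prime]

lemma isUnit_natCast_of_not_dvd {m : ℕ} (hm : ¬ p ∣ m) : IsUnit (m : ℤ_[p]) := by
  rw [PadicInt.isUnit_iff]
  have h1 : ¬ ‖((m : ℤ) : ℤ_[p])‖ < 1 := by
    rw [PadicInt.norm_int_lt_one_iff_dvd]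
    exact_mod_cast hm
  push_cast at h1
  exact le_antisymm (PadicInt.norm_le_one _) (not_lt.mp h1)

lemma smul_cancel_of_isUnit {M : Type*} [AddCommGroup M] [Module ℤ_[p] M]
    {c : ℤ_[p]} (hc : IsUnit c) {x : M} (h : c • x = 0) : x = 0 := by
  have := congrArg (fun y => (((hc.unit⁻¹ : ℤ_[p]ˣ) : ℤ_[p])) • y) h
  simpa [smul_smul] using this

variable (M : Type*) [AddCommGroup M] [Module ℤ_[p] M]

lemma card_eq_pPow [Finite M] : ∃ k : ℕ, Nat.card M = p ^ k := by
  rcases eq_or_ne (Nat.card M) 1 with h | h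
  · exact ⟨0, by simp [h]⟩
  · refine ⟨_, Nat.eq_prime_pow_of_unique_prime_dvd Nat.card_pos.ne' ?_⟩
    intro q hq hdvd
    by_contra hqp
    have := Fintype.ofFinite M
    have : Fact q.Prime := ⟨hq⟩
    rw [Nat.card_eq_fintype_card] at hdvd
    obtain ⟨x, hx⟩ := exists_prime_addOrderOf_dvd_card q hdvd
    have hqx : (q : ℤ_[p]) • x = 0 := by
      rw [Nat.cast_smul_eq_nsmul, ← hx]
      exact addOrderOf_nsmul_eq_zero x
    have hpq : ¬ p ∣ q := by
      intro hd
      exact hqp ((Nat.prime_dvd_prime_iff_eq (Fact.out) hq).mp hd).symm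
    have hx0 : x = 0 := smul_cancel_of_isUnit (isUnit_natCast_of_not_dvd hpq) hqx
    rw [hx0, addOrderOf_zero] at hx
    exact hq.one_lt.ne' hx.symm

lemma p_dvd_card [Finite M] [Nontrivial M] : p ∣ Nat.card M := by
  obtain ⟨k, hk⟩ := card_eq_pPow (p := p) M
  rcases k with _ | k
  · simp only [pow_zero] at hk
    exact absurd hk ((Finite.one_lt_card_iff_nontrivial).mpr ‹_›).ne'
  · rw [hk]
    exact dvd_pow_self p (Nat.succ_ne_zero k)

lemma exists_submodule_card_p [Finite M] [Nontrivial M] :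
    ∃ S : Submodule ℤ_[p] M, Nat.card S = p := by
  have := Fintype.ofFinite M
  have hdvd : p ∣ Fintype.card M := by
    rw [← Nat.card_eq_fintype_card]; exact p_dvd_card M
  obtain ⟨x, hx⟩ := exists_prime_addOrderOf_dvd_card p hdvd
  refine ⟨Submodule.span ℤ_[p] {x}, ?_⟩
  have hpx : (p : ℤ_[p]) • x = 0 := by
    rw [Nat.cast_smul_eq_nsmul, ← hx]
    exact addOrderOf_nsmul_eq_zero x
  have hset : (Submodule.span ℤ_[p] {x} : Set M) = (AddSubgroup.zmultiples x : Set M) := by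
    ext y
    constructor
    · intro hy
      rw [SetLike.mem_coe, Submodule.mem_span_singleton] at hy
      obtain ⟨c, rfl⟩ := hy
      have hs := PadicInt.appr_spec 1 c
      rw [Ideal.mem_span_singleton] at hs
      obtain ⟨d, hd⟩ := hs
      have hc : c = ((c.appr 1 : ℤ_[p])) + d * (p : ℤ_[p]) := by
        rw [mul_comm]
        rw [pow_one] at hd
        linear_combination hd
      have : c • x = ((c.appr 1 : ℕ) : ℤ_[p]) • x := by
        nth_rewrite 1 [hc]
        rw [add_smul, mul_smul, hpx, smul_zero, add_zero]
      rw [this, Nat.cast_smul_eq_nsmul]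
      exact AddSubgroup.mem_zmultiples_iff.mpr ⟨(c.appr 1 : ℤ), by rw [natCast_zsmul]⟩
    · intro hy
      rw [SetLike.mem_coe, AddSubgroup.mem_zmultiples_iff] at hy
      obtain ⟨k, rfl⟩ := hy
      rw [SetLike.mem_coe, ← Int.cast_smul_eq_zsmul ℤ_[p]]
      exact Submodule.smul_mem _ _ (Submodule.mem_span_singleton_self x)
  have : Nat.card (Submodule.span ℤ_[p] {x} : Submodule ℤ_[p] M)
      = Nat.card (AddSubgroup.zmultiples x) := by
    apply Nat.card_congr
    exact Equiv.setCongr hset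
  rw [this, Nat.card_zmultiples, hx]

end Padic




/-- The length of a `ℤ_[p]`-module `M`, defined as the Krull dimension of its
lattice of submodules. -/
noncomputable def zpLen (p : ℕ) [Fact p.Prime] (M : Type*) [AddCommGroup M]
    [Module ℤ_[p] M] : WithBot ℕ∞ :=
  Order.krullDim (Submodule ℤ_[p] M)

/-- A `ℤ_[p]`-linear map has finite kernel and finite cokernel. -/
def FinIdx {p : ℕ} [Fact p.Prime] {M N : Type*} [AddCommGroup M] [AddCommGroup N]
    [Module ℤ_[p] M] [Module ℤ_[p] N] (g : M →ₗ[ℤ_[p]] N) : Prop :=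
  Finite (ker g) ∧ Finite (N ⧸ range g)

/-- The "Kobayashi index" `len (ker g) - len (coker g) + rank (codomain)` of a
`ℤ_[p]`-linear map `g : M → N` (meaningful when `ker g` and `coker g` are finite). -/
noncomputable def kobIdx {p : ℕ} [Fact p.Prime] {M N : Type*} [AddCommGroup M]
    [AddCommGroup N] [Module ℤ_[p] M] [Module ℤ_[p] N] (g : M →ₗ[ℤ_[p]] N) : ℤ :=
  (((zpLen p (ker g)).unbotD 0).toNat : ℤ) - (((zpLen p (N ⧸ range g)).unbotD 0).toNat : ℤ)
    + (Module.finrank ℤ_[p] N : ℤ)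


section Length

variable {p : ℕ} [Fact p.Prime]
variable {M : Type*} [AddCommGroup M] [Module ℤ_[p] M]

lemma step_card [Finite M] {S T : Submodule ℤ_[p] M} (h : S < T) :
    p * Nat.card S ≤ Nat.card T := by
  have hST : S ≤ T := h.le
  set S' : Submodule ℤ_[p] T := Submodule.comap T.subtype S with hS'
  have hcard : Nat.card T = Nat.card (T ⧸ S') * Nat.card S' := card_quot_mul S'
  have hcS : Nat.card S' = Nat.card S :=
    Nat.card_congr (Submodule.comapSubtypeEquivOfLe hST).toEquiv
  have hne : S' ≠ ⊤ := by
    intro htop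
    exact h.not_ge (Submodule.comap_subtype_eq_top.mp htop)
  have : Nontrivial (T ⧸ S') :=
    Submodule.Quotient.nontrivial_iff.mpr hne
  have : Finite (T ⧸ S') := Finite.of_surjective _ (Submodule.Quotient.mk_surjective S')
  have hdvd : p ∣ Nat.card (T ⧸ S') := p_dvd_card (p := p) (T ⧸ S')
  have hp : p ≤ Nat.card (T ⧸ S') := Nat.le_of_dvd Nat.card_pos hdvd
  calc p * Nat.card S ≤ Nat.card (T ⧸ S') * Nat.card S := Nat.mul_le_mul_right _ hp
    _ = Nat.card T := by rw [← hcS, hcard]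

lemma series_length_le [Finite M] (s : LTSeries (Submodule ℤ_[p] M)) {k : ℕ}
    (hk : Nat.card M = p ^ k) : s.length ≤ k := by
  have hp1 : 1 < p := (Fact.out : p.Prime).one_lt
  have key : ∀ j, (hj : j ≤ s.length) → p ^ j ≤ Nat.card (s ⟨j, by omega⟩) := by
    intro j
    induction j with
    | zero => intro _; simpa using Nat.one_le_iff_ne_zero.mpr Nat.card_pos.ne'
    | succ n ih =>
      intro hj
      have h1 := ih (by omega)
      have hlt : s ⟨n, by omega⟩ < s ⟨n + 1, by omega⟩ := s.strictMono (by simp)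
      calc p ^ (n + 1) = p * p ^ n := by ring
        _ ≤ p * Nat.card (s ⟨n, by omega⟩) := Nat.mul_le_mul_left _ h1
        _ ≤ Nat.card (s ⟨n + 1, by omega⟩) := step_card hlt
  have h2 := key s.length le_rfl
  have h3 : Nat.card (s ⟨s.length, by omega⟩) ≤ Nat.card M :=
    Nat.card_le_card_of_injective _ Subtype.val_injective
  have : p ^ s.length ≤ p ^ k := by
    rw [← hk]; exact h2.trans h3
  exact (Nat.pow_le_pow_iff_right hp1).mp this

lemma exists_series_of_card :
    ∀ (k : ℕ) (M : Type*) [AddCommGroup M] [Module ℤ_[p] M] [Finite M],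
      Nat.card M = p ^ k → ∃ s : LTSeries (Submodule ℤ_[p] M), s.length = k := by
  intro k
  induction k with
  | zero => exact fun M _ _ _ _ => ⟨RelSeries.singleton _ ⊥, rfl⟩
  | succ n ih =>
    intro M _ _ _ hM
    have hp1 : 1 < p := (Fact.out : p.Prime).one_lt
    have : Nontrivial M := by
      rw [← Finite.one_lt_card_iff_nontrivial, hM]
      exact one_lt_pow₀ hp1 (Nat.succ_ne_zero n)
    obtain ⟨S, hS⟩ := exists_submodule_card_p (p := p) M
    have hq : Nat.card (M ⧸ S) = p ^ n := by
      have h1 := card_quot_mul S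
      rw [hS, hM, pow_succ] at h1
      exact Nat.eq_of_mul_eq_mul_right (by omega) h1.symm
    have finq : Finite (M ⧸ S) := Finite.of_surjective _ (Submodule.Quotient.mk_surjective S)
    obtain ⟨q, hq'⟩ := ih (M ⧸ S) hq
    have hmono : StrictMono (Submodule.comap S.mkQ) := by
      apply Monotone.strictMono_of_injective
      · exact fun a b hab => Submodule.comap_mono hab
      · exact Submodule.comap_injective_of_surjective
          (Submodule.Quotient.mk_surjective S)
    have hSle : S ≤ Submodule.comap S.mkQ q.head := by
      intro x hx
      rw [Submodule.mem_comap]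
      have : S.mkQ x = 0 := by
        simpa [Submodule.mkQ_apply] using (Submodule.Quotient.mk_eq_zero S).mpr hx
      rw [this]
      exact Submodule.zero_mem _
    have hSbot : S ≠ ⊥ := by
      intro hbot
      have : Nontrivial S := by
        rw [← Finite.one_lt_card_iff_nontrivial, hS]
        exact hp1
      rw [hbot] at this
      obtain ⟨⟨a, ha⟩, ⟨b, hb⟩, hab⟩ := this
      simp only [Submodule.mem_bot] at ha hb
      exact hab (by subst ha; subst hb; rfl)
    have hb : (⊥ : Submodule ℤ_[p] M) < (q.map _ hmono).head := by
      rw [LTSeries.head_map]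
      exact bot_lt_iff_ne_bot.mpr fun h0 => hSbot (le_bot_iff.mp (h0 ▸ hSle))
    refine ⟨(q.map _ hmono).cons ⊥ hb, ?_⟩
    simp [RelSeries.cons_length, hq']

lemma zpLen_eq [Finite M] {k : ℕ} (h : Nat.card M = p ^ k) :
    zpLen p M = ((k : ℕ∞) : WithBot ℕ∞) := by
  rw [zpLen, Order.krullDim_eq_iSup_length, WithBot.coe_inj]
  apply le_antisymm
  · exact iSup_le fun s => by exact_mod_cast series_length_le s h
  · obtain ⟨s, hs⟩ := exists_series_of_card k M h
    rw [← hs]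
    exact le_iSup (fun s : LTSeries (Submodule ℤ_[p] M) => (s.length : ℕ∞)) s

lemma card_eq_pow_len (M : Type*) [AddCommGroup M] [Module ℤ_[p] M] [Finite M] :
    Nat.card M = p ^ ((zpLen p M).unbotD 0).toNat := by
  obtain ⟨k, hk⟩ := card_eq_pPow (p := p) M
  rw [zpLen_eq hk]
  simpa using hk

end Length
section RankAdd

variable {p : ℕ} [Fact p.Prime]

lemma finrank_additive {B' B B'' : Type*} [AddCommGroup B'] [AddCommGroup B] [AddCommGroup B'']
    [Module ℤ_[p] B'] [Module ℤ_[p] B] [Module ℤ_[p] B'']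
    [Module.Finite ℤ_[p] B'] [Module.Finite ℤ_[p] B] [Module.Finite ℤ_[p] B'']
    (ιB : B' →ₗ[ℤ_[p]] B) (prB : B →ₗ[ℤ_[p]] B'')
    (hιB : Function.Injective ιB) (hexB : Function.Exact ιB prB)
    (hprB : Function.Surjective prB) :
    Module.finrank ℤ_[p] B = Module.finrank ℤ_[p] B' + Module.finrank ℤ_[p] B'' := by
  have hker : ker prB = range ιB := LinearMap.exact_iff.mp hexB
  have e1 : B' ≃ₗ[ℤ_[p]] range ιB := LinearEquiv.ofInjective ιB hιB
  have e2 : (B ⧸ range ιB) ≃ₗ[ℤ_[p]] B'' := by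
    rw [← hker]
    exact prB.quotKerEquivOfSurjective hprB
  have hfin1 : Module.Finite ℤ_[p] (B ⧸ range ιB) := Module.Finite.quotient ℤ_[p] _
  have hfin2 : Module.Finite ℤ_[p] (range ιB) := Module.Finite.range ιB
  have hrk := rank_quotient_add_rank_of_isDomain (R := ℤ_[p]) (M := B) (range ιB)
  have h1 : Module.rank ℤ_[p] (B ⧸ range ιB) < Cardinal.aleph0 := Module.rank_lt_aleph0 _ _
  have h2 : Module.rank ℤ_[p] (range ιB : Submodule ℤ_[p] B) < Cardinal.aleph0 :=
    Module.rank_lt_aleph0 _ _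
  have hto := congrArg Cardinal.toNat hrk
  rw [Cardinal.toNat_add h1 h2] at hto
  have hq : Module.finrank ℤ_[p] (B ⧸ range ιB) = Module.finrank ℤ_[p] B'' :=
    e2.finrank_eq
  have hs : Module.finrank ℤ_[p] (range ιB : Submodule ℤ_[p] B) = Module.finrank ℤ_[p] B' :=
    e1.symm.finrank_eq
  simp only [Module.finrank] at hq hs ⊢
  omega

end RankAdd

section Snake

variable {p : ℕ} [Fact p.Prime]

theorem snakeCards
    {A' A A'' B' B B'' : Type*}
    [AddCommGroup A'] [AddCommGroup A] [AddCommGroup A'']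
    [AddCommGroup B'] [AddCommGroup B] [AddCommGroup B'']
    [Module ℤ_[p] A'] [Module ℤ_[p] A] [Module ℤ_[p] A'']
    [Module ℤ_[p] B'] [Module ℤ_[p] B] [Module ℤ_[p] B'']
    (ιA : A' →ₗ[ℤ_[p]] A) (prA : A →ₗ[ℤ_[p]] A'')
    (ιB : B' →ₗ[ℤ_[p]] B) (prB : B →ₗ[ℤ_[p]] B'')
    (hιA : Function.Injective ιA) (hexA : Function.Exact ιA prA)
    (hprA : Function.Surjective prA)
    (hιB : Function.Injective ιB) (hexB : Function.Exact ιB prB)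
    (hprB : Function.Surjective prB)
    (f' : A' →ₗ[ℤ_[p]] B') (f : A →ₗ[ℤ_[p]] B) (f'' : A'' →ₗ[ℤ_[p]] B'')
    (hcomm₁ : f ∘ₗ ιA = ιB ∘ₗ f') (hcomm₂ : f'' ∘ₗ prA = prB ∘ₗ f) :
    ((FinIdx f' ∧ FinIdx f → FinIdx f'') ∧
     (FinIdx f' ∧ FinIdx f'' → FinIdx f) ∧
     (FinIdx f ∧ FinIdx f'' → FinIdx f')) ∧
    (FinIdx f' → FinIdx f → FinIdx f'' →
      Nat.card (ker f) * Nat.card (B' ⧸ range f') * Nat.card (B'' ⧸ range f'')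
        = Nat.card (ker f') * Nat.card (ker f'') * Nat.card (B ⧸ range f)) := by
  have hc1 : ∀ a', f (ιA a') = ιB (f' a') := fun a' => LinearMap.congr_fun hcomm₁ a'
  have hc2 : ∀ a, f'' (prA a) = prB (f a) := fun a => LinearMap.congr_fun hcomm₂ a
  have hkerA : ker prA = range ιA := LinearMap.exact_iff.mp hexA
  have hkerB : ker prB = range ιB := LinearMap.exact_iff.mp hexB
  -- the map `ker f → ker f''`
  have hg1mem : ∀ x ∈ ker f, prA x ∈ ker f'' := by
    intro x hx
    rw [mem_ker] at hx ⊢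
    rw [hc2, hx, map_zero]
  set g1 : ker f →ₗ[ℤ_[p]] ker f'' := prA.restrict hg1mem with hg1def
  have hg1 : ∀ x : ker f, (g1 x : A'') = prA (x : A) := fun x => rfl
  -- the bijection `ker f' → ker g1`
  have hGmem1 : ∀ x' : ker f', ιA (x' : A') ∈ ker f := by
    intro x'
    rw [mem_ker, hc1, (mem_ker.mp x'.2 : f' _ = 0), map_zero]
  have hGmem2 : ∀ x' : ker f', (⟨ιA (x' : A'), hGmem1 x'⟩ : ker f) ∈ ker g1 := by
    intro x'
    rw [mem_ker]
    apply Subtype.ext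
    show prA (ιA (x' : A')) = 0
    rw [← mem_ker, hkerA]
    exact ⟨x', rfl⟩
  set G : ker f' → ker g1 := fun x' => ⟨⟨ιA (x' : A'), hGmem1 x'⟩, hGmem2 x'⟩ with hGdef
  have hGbij : Function.Bijective G := by
    constructor
    · intro a b hab
      apply Subtype.ext
      apply hιA
      exact congrArg (fun z : ker g1 => ((z : ker f) : A)) hab
    · rintro ⟨⟨x, hx⟩, hxg⟩
      have hx0 : prA x = 0 := congrArg Subtype.val (mem_ker.mp hxg)
      obtain ⟨x', hx'⟩ := (hexA x).mp hx0
      have hfx' : f' x' = 0 := by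
        apply hιB
        rw [map_zero, ← hc1, hx']
        exact mem_ker.mp hx
      exact ⟨⟨x', hfx'⟩, by apply Subtype.ext; apply Subtype.ext; exact hx'⟩
  -- the submodule D and the map θ : D → B' ⧸ range f'
  set D : Submodule ℤ_[p] A := ker (prB ∘ₗ f) with hDdef
  have hDmem : ∀ x : D, f (x : A) ∈ range ιB := by
    intro x
    rw [← hkerB, mem_ker]
    exact mem_ker.mp x.2
  set eB : B' ≃ₗ[ℤ_[p]] range ιB := LinearEquiv.ofInjective ιB hιB with heBdef
  have heBsymm : ∀ z : range ιB, ιB (eB.symm z) = (z : B) := by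
    intro z
    conv_rhs => rw [← LinearEquiv.apply_symm_apply eB z]
    rw [heBdef]
    exact (LinearEquiv.ofInjective_apply (h := hιB) ιB (eB.symm z))
  set θ : D →ₗ[ℤ_[p]] (B' ⧸ range f') :=
    (range f').mkQ ∘ₗ (eB.symm.toLinearMap) ∘ₗ
      LinearMap.codRestrict (range ιB) (f ∘ₗ D.subtype) (fun x => hDmem x) with hθdef
  have hθeval : ∀ x : D, θ x = Submodule.Quotient.mk (eB.symm ⟨f (x : A), hDmem x⟩) := by
    intro x
    rw [hθdef]
    rfl
  have hθ : ∀ (x : D) (b' : B'), ιB b' = f (x : A) → θ x = Submodule.Quotient.mk b' := by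
    intro x b' hb'
    rw [hθeval]
    congr 1
    have : eB b' = ⟨f (x : A), hDmem x⟩ := by
      apply Subtype.ext
      rw [heBdef, LinearEquiv.ofInjective_apply]
      exact hb'
    rw [← this, LinearEquiv.symm_apply_apply]
  -- θ only depends on the image under prA
  have hfiber : ∀ x y : D, prA (x : A) = prA (y : A) → θ x = θ y := by
    intro x y hxy
    have hsub : (x : A) - (y : A) ∈ ker prA := by
      rw [mem_ker, map_sub, hxy, sub_self]
    rw [hkerA] at hsub
    obtain ⟨a', ha'⟩ := hsub
    have hθxy : θ (x - y) = Submodule.Quotient.mk (f' a') := by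
      apply hθ
      rw [← hc1, ha']
      simp
    have h0 : (Submodule.Quotient.mk (f' a') : B' ⧸ range f') = 0 :=
      (Submodule.Quotient.mk_eq_zero _).mpr ⟨a', rfl⟩
    have := (map_sub θ x y).symm.trans (hθxy.trans h0)
    exact sub_eq_zero.mp this
  -- the connecting map δ : ker f'' → B' ⧸ range f'
  have hmemD : ∀ x : ker f'', Function.surjInv hprA (x : A'') ∈ D := by
    intro x
    rw [hDdef, mem_ker]
    show prB (f (Function.surjInv hprA (x : A''))) = 0
    rw [← hc2, Function.surjInv_eq hprA]
    exact mem_ker.mp x.2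
  set σ : ker f'' → D := fun x => ⟨Function.surjInv hprA (x : A''), hmemD x⟩ with hσdef
  have hσ : ∀ x : ker f'', prA ((σ x : D) : A) = (x : A'') :=
    fun x => Function.surjInv_eq hprA _
  set δ : ker f'' →ₗ[ℤ_[p]] (B' ⧸ range f') :=
    { toFun := fun x => θ (σ x)
      map_add' := by
        intro x y
        rw [← map_add]
        apply hfiber
        rw [Submodule.coe_add, map_add, hσ, hσ, hσ]
        rfl
      map_smul' := by
        intro c x
        rw [RingHom.id_apply, ← map_smul]
        apply hfiber
        rw [Submodule.coe_smul, map_smul, hσ, hσ]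
        rfl } with hδdef
  have hδ : ∀ (x : ker f'') (a : D), prA (a : A) = (x : A'') → δ x = θ a := by
    intro x a ha
    show θ (σ x) = θ a
    apply hfiber
    rw [hσ, ha]
  -- exactness at ker f''
  have E2 : ker δ = range g1 := by
    ext x
    rw [mem_ker, mem_range]
    constructor
    · intro hx
      have hθσ : θ (σ x) = 0 := hx
      rw [hθeval (σ x)] at hθσ
      obtain ⟨a', ha'⟩ := (Submodule.Quotient.mk_eq_zero _).mp hθσ
      have hb'2 : ιB (eB.symm ⟨f ((σ x : D) : A), hDmem (σ x)⟩) = f ((σ x : D) : A) :=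
        heBsymm _
      have hfk : f (((σ x : D) : A) - ιA a') = 0 := by
        rw [map_sub, hc1, ha', hb'2, sub_self]
      refine ⟨⟨_, hfk⟩, ?_⟩
      apply Subtype.ext
      show prA (((σ x : D) : A) - ιA a') = (x : A'')
      rw [map_sub, hσ]
      have : prA (ιA a') = 0 := by
        rw [← mem_ker, hkerA]; exact ⟨a', rfl⟩
      rw [this, sub_zero]
    · rintro ⟨k, rfl⟩
      have hkD : (k : A) ∈ D := by
        rw [hDdef, mem_ker]
        show prB (f (k : A)) = 0
        rw [mem_ker.mp k.2, map_zero]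
      rw [hδ (g1 k) ⟨(k : A), hkD⟩ (hg1 k).symm]
      rw [hθ ⟨(k : A), hkD⟩ 0 (by rw [map_zero, mem_ker.mp k.2])]
      exact (Submodule.Quotient.mk_eq_zero _).mpr (Submodule.zero_mem _)
  -- the map v : B' ⧸ range f' → B ⧸ range f
  have hvle : range f' ≤ Submodule.comap ιB (range f) := by
    rintro _ ⟨a', rfl⟩
    exact ⟨ιA a', hc1 a'⟩
  set v := Submodule.mapQ (range f') (range f) ιB hvle with hvdef
  have hveval : ∀ b' : B', v (Submodule.Quotient.mk b') = Submodule.Quotient.mk (ιB b') :=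
    fun b' => Submodule.mapQ_apply _ _ ιB b'
  -- exactness at B' ⧸ range f'
  have E3 : ker v = range δ := by
    ext z
    rw [mem_ker, mem_range]
    constructor
    · intro hz
      obtain ⟨b', rfl⟩ := Submodule.Quotient.mk_surjective _ z
      rw [hveval] at hz
      obtain ⟨a, ha⟩ := (Submodule.Quotient.mk_eq_zero _).mp hz
      have hprBb : prB (ιB b') = 0 := by
        rw [← mem_ker, hkerB]; exact ⟨b', rfl⟩
      have haD : a ∈ D := by
        rw [hDdef, mem_ker]
        show prB (f a) = 0
        rw [ha, hprBb]
      have hxk : prA a ∈ ker f'' := by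
        rw [mem_ker, hc2, ha, hprBb]
      refine ⟨⟨prA a, hxk⟩, ?_⟩
      rw [hδ ⟨prA a, hxk⟩ ⟨a, haD⟩ rfl]
      exact (hθ ⟨a, haD⟩ b' ha.symm).symm ▸ rfl
    · rintro ⟨x, rfl⟩
      have : δ x = θ (σ x) := rfl
      rw [this, hθeval (σ x), hveval, heBsymm]
      rw [Submodule.Quotient.mk_eq_zero]
      exact ⟨((σ x : D) : A), rfl⟩
  -- the map w : B ⧸ range f → B'' ⧸ range f''
  have hwle : range f ≤ Submodule.comap prB (range f'') := by
    rintro _ ⟨a, rfl⟩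
    exact ⟨prA a, hc2 a⟩
  set w := Submodule.mapQ (range f) (range f'') prB hwle with hwdef
  have hweval : ∀ b : B, w (Submodule.Quotient.mk b) = Submodule.Quotient.mk (prB b) :=
    fun b => Submodule.mapQ_apply _ _ prB b
  have hwsurj : Function.Surjective w := by
    intro z
    obtain ⟨b'', rfl⟩ := Submodule.Quotient.mk_surjective _ z
    obtain ⟨b, rfl⟩ := hprB b''
    exact ⟨Submodule.Quotient.mk b, hweval b⟩
  -- exactness at B ⧸ range f
  have E4 : ker w = range v := by
    ext z
    rw [mem_ker, mem_range]
    constructor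
    · intro hz
      obtain ⟨b, rfl⟩ := Submodule.Quotient.mk_surjective _ z
      rw [hweval] at hz
      obtain ⟨a'', ha''⟩ := (Submodule.Quotient.mk_eq_zero _).mp hz
      obtain ⟨a, rfl⟩ := hprA a''
      have hsub : b - f a ∈ ker prB := by
        rw [mem_ker, map_sub, ← ha'', hc2, sub_self]
      rw [hkerB] at hsub
      obtain ⟨b', hb'⟩ := hsub
      refine ⟨Submodule.Quotient.mk b', ?_⟩
      rw [hveval, hb']
      rw [Submodule.Quotient.eq]
      have hout : b - f a - b = -(f a) := by abel
      rw [hout]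
      exact Submodule.neg_mem _ (LinearMap.mem_range_self f a)
    · rintro ⟨y, rfl⟩
      obtain ⟨b', rfl⟩ := Submodule.Quotient.mk_surjective _ y
      rw [hveval, hweval]
      rw [Submodule.Quotient.mk_eq_zero]
      have : prB (ιB b') = 0 := by
        rw [← mem_ker, hkerB]; exact ⟨b', rfl⟩
      rw [this]
      exact Submodule.zero_mem _
  constructor
  · refine ⟨?_, ?_, ?_⟩
    · rintro ⟨⟨hk', hc'⟩, ⟨hk, hc⟩⟩
      haveI := hk'; haveI := hc'; haveI := hk; haveI := hc
      haveI : Finite (range g1) := finite_range_of_finite g1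
      haveI : Finite (ker δ) := by rw [E2]; infer_instance
      haveI : Finite (range δ) := inferInstance
      haveI : Finite (ker f'') := finite_of_finite_ker_range δ
      haveI : Finite (B'' ⧸ range f'') := Finite.of_surjective w hwsurj
      exact ⟨‹_›, ‹_›⟩
    · rintro ⟨⟨hk', hc'⟩, ⟨hk'', hc''⟩⟩
      haveI := hk'; haveI := hc'; haveI := hk''; haveI := hc''
      haveI : Finite (ker g1) := Finite.of_surjective G hGbij.surjective
      haveI : Finite (range g1) := inferInstance
      haveI : Finite (ker f) := finite_of_finite_ker_range g1
      haveI : Finite (range v) := finite_range_of_finite v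
      haveI : Finite (ker w) := by rw [E4]; infer_instance
      haveI : Finite (range w) := inferInstance
      haveI : Finite (B ⧸ range f) := finite_of_finite_ker_range w
      exact ⟨‹_›, ‹_›⟩
    · rintro ⟨⟨hk, hc⟩, ⟨hk'', hc''⟩⟩
      haveI := hk; haveI := hc; haveI := hk''; haveI := hc''
      haveI : Finite (ker g1) := inferInstance
      haveI : Finite (ker f') := Finite.of_injective G hGbij.injective
      haveI : Finite (range δ) := finite_range_of_finite δ
      haveI : Finite (ker v) := by rw [E3]; infer_instance
      haveI : Finite (range v) := inferInstance
      haveI : Finite (B' ⧸ range f') := finite_of_finite_ker_range v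
      exact ⟨‹_›, ‹_›⟩
  · rintro ⟨hk', hc'⟩ ⟨hk, hc⟩ ⟨hk'', hc''⟩
    haveI := hk'; haveI := hc'; haveI := hk; haveI := hc; haveI := hk''; haveI := hc''
    have c1 : Nat.card (ker f) = Nat.card (ker f') * Nat.card (range g1) := by
      rw [card_ker_mul_card_range g1, Nat.card_eq_of_bijective G hGbij]
    have c2 : Nat.card (ker f'') = Nat.card (range g1) * Nat.card (range δ) := by
      rw [card_ker_mul_card_range δ, E2]
    have c3 : Nat.card (B' ⧸ range f') = Nat.card (range δ) * Nat.card (range v) := by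
      rw [card_ker_mul_card_range v, E3]
    have c4 : Nat.card (B ⧸ range f) = Nat.card (range v) * Nat.card (B'' ⧸ range f'') := by
      rw [card_ker_mul_card_range w, E4]
      congr 1
      have : range w = ⊤ := range_eq_top.mpr hwsurj
      rw [this]
      exact Nat.card_congr Submodule.topEquiv.toEquiv
    rw [c1, c2, c3, c4]
    ring

end Snake


/-- Given a commutative diagram of finitely generated `ℤ_[p]`-modules with exact rows
`0 → A' → A → A'' → 0` and `0 → B' → B → B'' → 0` and vertical maps `f', f, f''`:
if any two of `f', f, f''` have finite kernel and cokernel then so does the third,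
and in that case the index `len ker - len coker + rank` of `f` is the sum of those of
`f'` and `f''`.  This is the additivity of the Kobayashi rank in short exact
sequences of inverse systems. -/
theorem stmt1 (p : ℕ) [Fact p.Prime]
    (A' A A'' B' B B'' : Type*)
    [AddCommGroup A'] [AddCommGroup A] [AddCommGroup A'']
    [AddCommGroup B'] [AddCommGroup B] [AddCommGroup B'']
    [Module ℤ_[p] A'] [Module ℤ_[p] A] [Module ℤ_[p] A'']
    [Module ℤ_[p] B'] [Module ℤ_[p] B] [Module ℤ_[p] B'']
    [Module.Finite ℤ_[p] A'] [Module.Finite ℤ_[p] A] [Module.Finite ℤ_[p] A'']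
    [Module.Finite ℤ_[p] B'] [Module.Finite ℤ_[p] B] [Module.Finite ℤ_[p] B'']
    (ιA : A' →ₗ[ℤ_[p]] A) (prA : A →ₗ[ℤ_[p]] A'')
    (ιB : B' →ₗ[ℤ_[p]] B) (prB : B →ₗ[ℤ_[p]] B'')
    (hιA : Function.Injective ιA) (hexA : Function.Exact ιA prA)
    (hprA : Function.Surjective prA)
    (hιB : Function.Injective ιB) (hexB : Function.Exact ιB prB)
    (hprB : Function.Surjective prB)
    (f' : A' →ₗ[ℤ_[p]] B') (f : A →ₗ[ℤ_[p]] B) (f'' : A'' →ₗ[ℤ_[p]] B'')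
    (hcomm₁ : f ∘ₗ ιA = ιB ∘ₗ f') (hcomm₂ : f'' ∘ₗ prA = prB ∘ₗ f) :
    ((FinIdx f' ∧ FinIdx f → FinIdx f'') ∧
     (FinIdx f' ∧ FinIdx f'' → FinIdx f) ∧
     (FinIdx f ∧ FinIdx f'' → FinIdx f')) ∧
    (FinIdx f' → FinIdx f → FinIdx f'' → kobIdx f = kobIdx f' + kobIdx f'') := by
  obtain ⟨hfin, hcards⟩ := snakeCards ιA prA ιB prB hιA hexA hprA hιB hexB hprB f' f f''
    hcomm₁ hcomm₂
  refine ⟨hfin, ?_⟩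
  intro h' h h''
  have hcard := hcards h' h h''
  obtain ⟨hk', hc'⟩ := h'
  obtain ⟨hk, hc⟩ := h
  obtain ⟨hk'', hc''⟩ := h''
  haveI := hk'; haveI := hc'; haveI := hk; haveI := hc; haveI := hk''; haveI := hc''
  rw [card_eq_pow_len (p := p) (↥(ker f)), card_eq_pow_len (p := p) (B' ⧸ range f'),
      card_eq_pow_len (p := p) (B'' ⧸ range f''), card_eq_pow_len (p := p) (↥(ker f')),
      card_eq_pow_len (p := p) (↥(ker f'')), card_eq_pow_len (p := p) (B ⧸ range f),
      ← pow_add, ← pow_add, ← pow_add, ← pow_add] at hcard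
  have hexp := Nat.pow_right_injective (Fact.out : p.Prime).two_le hcard
  have hrank := finrank_additive ιB prB hιB hexB hprB
  simp only [kobIdx]
  omega
end

section
/- Let f, h ∈ Λ be nonzero elements with no common irreducible factor (i.e., f and h are coprime in the unique factorization domain Λ). Then the quotient Λ/(f, h) is finite. -/
open PowerSeries Finset

namespace Stmt7

variable {p : ℕ} [Fact p.Prime]

local notation "Λ" => PowerSeries ℤ_[p]
local notation "cf" => PowerSeries.coeff (R := ℤ_[p])

/-- shift a power series down by `n`. -/
noncomputable def sh (n : ℕ) (g : Λ) : Λ := PowerSeries.mk fun i => cf (n + i) g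

/-- the part of a power series of degree `< n`. -/
noncomputable def lo (n : ℕ) (g : Λ) : Λ := PowerSeries.mk fun i => if i < n then cf i g else 0

@[simp] lemma coeff_sh (n i : ℕ) (g : Λ) : cf i (sh n g) = cf (n + i) g := coeff_mk ..

@[simp] lemma coeff_lo (n i : ℕ) (g : Λ) : cf i (lo n g) = if i < n then cf i g else 0 :=
  coeff_mk ..

lemma decomp (n : ℕ) (g : Λ) : g = lo n g + X ^ n * sh n g := by
  ext i
  rw [map_add, coeff_lo, coeff_X_pow_mul']
  by_cases hi : i < n
  · simp [hi, not_le.mpr hi]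
  · rw [if_neg hi, if_pos (not_lt.mp hi), zero_add, coeff_sh]
    rw [Nat.add_sub_cancel' (not_lt.mp hi)]

lemma isUnit_or_dvd (x : ℤ_[p]) : IsUnit x ∨ (p : ℤ_[p]) ∣ x := by
  by_cases hx : IsUnit x
  · exact Or.inl hx
  · exact Or.inr ((PadicInt.norm_lt_one_iff_dvd x).mp (PadicInt.not_isUnit_iff.mp hx))

lemma pdvd_of_not_isUnit {x : ℤ_[p]} (hx : ¬ IsUnit x) : (p : ℤ_[p]) ∣ x :=
  (isUnit_or_dvd x).resolve_left hx

lemma C_pow_dvd_iff (k : ℕ) (g : Λ) :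
    (p : Λ) ^ k ∣ g ↔ ∀ i, (p : ℤ_[p]) ^ k ∣ cf i g := by
  have hC : (p : Λ) = PowerSeries.C (R := ℤ_[p]) (p : ℤ_[p]) := by
    rw [map_natCast]
  constructor
  · rintro ⟨d, rfl⟩ i
    rw [hC, ← map_pow, coeff_C_mul]
    exact Dvd.intro _ rfl
  · intro hi
    refine ⟨PowerSeries.mk fun i => (hi i).choose, ?_⟩
    ext i
    rw [hC, ← map_pow, coeff_C_mul, coeff_mk]
    exact (hi i).choose_spec

lemma C_pow_dvd_sh {k n : ℕ} {g : Λ} (hg : (p : Λ) ^ k ∣ g) : (p : Λ) ^ k ∣ sh n g := by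
  rw [C_pow_dvd_iff] at hg ⊢
  intro i; simpa using hg (n + i)

lemma norm_le_of_dvd {k : ℕ} {x : ℤ_[p]} (hx : (p : ℤ_[p]) ^ k ∣ x) :
    ‖x‖ ≤ ((p : ℝ)⁻¹) ^ k := by
  have := (PadicInt.norm_le_pow_iff_mem_span_pow x k).mpr (Ideal.mem_span_singleton.mpr hx)
  calc ‖x‖ ≤ (p : ℝ) ^ (-(k : ℤ)) := this
  _ = ((p : ℝ)⁻¹) ^ k := by
      rw [zpow_neg, inv_pow, zpow_natCast]

lemma summable_of_pow_dvd {c : ℕ → ℤ_[p]} (hc : ∀ j, (p : ℤ_[p]) ^ j ∣ c j) :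
    Summable c := by
  have hp1 : (1 : ℝ) < (p : ℝ) := by
    exact_mod_cast (Fact.out : p.Prime).one_lt
  refine Summable.of_norm_bounded (g := fun j => ((p : ℝ)⁻¹) ^ j) ?_ fun j => norm_le_of_dvd (hc j)
  exact summable_geometric_of_lt_one (by positivity) (inv_lt_one_of_one_lt₀ hp1)


section WDiv

set_option maxHeartbeats 1000000 in
/-- Weierstrass division in `ℤ_p[[X]]`: if the coefficients of `f` below degree `n` are
non-units while the `n`-th one is a unit, then any `g` can be written `q * f + r` with
`r` of degree `< n`. -/
lemma wdiv (f : Λ) (n : ℕ) (hn : IsUnit (cf n f)) (hlow : ∀ i < n, ¬ IsUnit (cf i f)) (g : Λ) :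
    ∃ q r : Λ, g = q * f + r ∧ ∀ i, n ≤ i → cf i r = 0 := by
  classical
  -- the unit part
  have hU : IsUnit (sh n f) := by
    rw [PowerSeries.isUnit_iff_constantCoeff, ← coeff_zero_eq_constantCoeff_apply, coeff_sh,
      Nat.add_zero]
    exact hn
  obtain ⟨u, hu⟩ := hU
  set V : Λ := ((u⁻¹ : Λˣ) : Λ) with hVdef
  have hUV : sh n f * V = 1 := by rw [← hu, hVdef, ← Units.val_mul, mul_inv_cancel, Units.val_one]
  have hploF : (p : Λ) ^ 1 ∣ lo n f := by
    rw [C_pow_dvd_iff]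
    intro i
    rw [pow_one, coeff_lo]
    split
    · exact pdvd_of_not_isUnit (hlow i (by assumption))
    · exact dvd_zero _
  -- the approximating sequence
  let gs : ℕ → Λ := fun j => Nat.rec g (fun _ gj => -(V * sh n gj * lo n f)) j
  have hgs_succ : ∀ j, gs (j + 1) = -(V * sh n (gs j) * lo n f) := fun j => rfl
  have hdvd : ∀ j, (p : Λ) ^ j ∣ gs j := by
    intro j
    induction j with
    | zero => simpa using one_dvd _
    | succ j ih =>
      rw [hgs_succ, pow_succ]
      exact Dvd.dvd.neg_right (mul_dvd_mul (Dvd.dvd.mul_left (C_pow_dvd_sh ih) V)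
        (by simpa using hploF))
  -- the three relevant coefficient sequences and their summability
  have hq_dvd : ∀ j, (p : Λ) ^ j ∣ V * sh n (gs j) :=
    fun j => Dvd.dvd.mul_left (C_pow_dvd_sh (hdvd j)) V
  have key : ∀ j, (V * sh n (gs j)) * f + lo n (gs j) = gs j - gs (j + 1) := by
    intro j
    rw [hgs_succ]
    have hf' : f = lo n f + X ^ n * sh n f := decomp n f
    have h2 : gs j = lo n (gs j) + X ^ n * sh n (gs j) := decomp n (gs j)
    linear_combination (V * sh n (gs j)) * hf' + (X ^ n * sh n (gs j)) * hUV - h2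
  -- summability of all coefficientwise sequences
  have hsq : ∀ i, Summable fun j => cf i (V * sh n (gs j)) := by
    intro i
    exact summable_of_pow_dvd fun j => (C_pow_dvd_iff _ _).mp (hq_dvd j) i
  have hsqf : ∀ i, Summable fun j => cf i ((V * sh n (gs j)) * f) := by
    intro i
    exact summable_of_pow_dvd fun j => (C_pow_dvd_iff _ _).mp ((hq_dvd j).mul_right f) i
  have hsr : ∀ i, Summable fun j => cf i (lo n (gs j)) := by
    intro i
    refine summable_of_pow_dvd fun j => ?_
    have : (p : Λ) ^ j ∣ lo n (gs j) := by
      rw [C_pow_dvd_iff]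
      intro i'
      rw [coeff_lo]
      split
      · exact (C_pow_dvd_iff _ _).mp (hdvd j) i'
      · exact dvd_zero _
    exact (C_pow_dvd_iff _ _).mp this i
  set q : Λ := PowerSeries.mk fun i => ∑' j, cf i (V * sh n (gs j)) with hq
  set r : Λ := PowerSeries.mk fun i => ∑' j, cf i (lo n (gs j)) with hr
  refine ⟨q, r, ?_, ?_⟩
  · ext i
    -- coefficient of q * f
    have h1 : cf i (q * f) = ∑' j, cf i ((V * sh n (gs j)) * f) := by
      rw [PowerSeries.coeff_mul]
      have : ∀ uv ∈ antidiagonal i,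
          cf uv.1 q * cf uv.2 f = ∑' j, cf uv.1 (V * sh n (gs j)) * cf uv.2 f := by
        intro uv _
        rw [hq, coeff_mk]
        exact ((hsq uv.1).tsum_mul_right _).symm
      rw [Finset.sum_congr rfl this, ← Summable.tsum_finsetSum (fun uv _ => (hsq uv.1).mul_right _)]
      congr 1
      ext j
      rw [PowerSeries.coeff_mul]
    rw [map_add, h1, hr, coeff_mk, ← Summable.tsum_add (hsqf i) (hsr i)]
    have h2 : ∀ j, cf i ((V * sh n (gs j)) * f) + cf i (lo n (gs j))
        = cf i (gs j) - cf i (gs (j + 1)) := by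
      intro j
      rw [← map_add, key j, map_sub]
    rw [tsum_congr h2]
    -- telescoping
    have hc : ∀ j, (p : ℤ_[p]) ^ j ∣ cf i (gs j) :=
      fun j => (C_pow_dvd_iff _ _).mp (hdvd j) i
    have hcs : Summable fun j => cf i (gs j) - cf i (gs (j + 1)) := by
      refine summable_of_pow_dvd fun j => dvd_sub (hc j) ?_
      exact dvd_trans (pow_dvd_pow _ (Nat.le_succ j)) (hc (j + 1))
    have htend : Filter.Tendsto (fun j => cf i (gs j)) Filter.atTop (nhds 0) := by
      have hp1 : (1 : ℝ) < (p : ℝ) := by exact_mod_cast (Fact.out : p.Prime).one_lt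
      refine squeeze_zero_norm (fun j => norm_le_of_dvd (hc j)) ?_
      exact tendsto_pow_atTop_nhds_zero_of_lt_one (by positivity) (inv_lt_one_of_one_lt₀ hp1)
    obtain ⟨a, ha⟩ := hcs
    have h1 := ha.tendsto_sum_nat
    have h2 : Filter.Tendsto (fun J => ∑ j ∈ range J, (cf i (gs j) - cf i (gs (j + 1))))
        Filter.atTop (nhds (cf i g)) := by
      have heq : ∀ J : ℕ, ∑ j ∈ range J, (cf i (gs j) - cf i (gs (j + 1)))
          = cf i g - cf i (gs J) := by
        intro J
        exact Finset.sum_range_sub' (fun j => cf i (gs j)) J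
      simp only [heq]
      simpa using tendsto_const_nhds.sub htend
    rw [ha.tsum_eq]
    exact tendsto_nhds_unique h2 h1
  · intro i hi
    rw [hr, coeff_mk]
    have : ∀ j, cf i (lo n (gs j)) = 0 := by
      intro j
      rw [coeff_lo, if_neg (not_lt.mpr hi)]
    rw [tsum_congr this, tsum_zero]

end WDiv


lemma exists_unit_coeff {g : Λ} (hg : ¬ (p : Λ) ∣ g) : ∃ i, IsUnit (cf i g) := by
  by_contra hcon
  push_neg at hcon
  refine hg ?_
  have := (C_pow_dvd_iff 1 g).mpr fun i => by
    simpa using pdvd_of_not_isUnit (hcon i)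
  simpa using this

lemma strip {g : Λ} (hg : g ≠ 0) :
    ∃ (a : ℕ) (g' : Λ), g = (p : Λ) ^ a * g' ∧ ¬ (p : Λ) ∣ g' := by
  classical
  have hp1 : (1 : ℝ) < (p : ℝ) := by exact_mod_cast (Fact.out : p.Prime).one_lt
  have hQ : ∃ k, ¬ (p : Λ) ^ k ∣ g := by
    obtain ⟨i₀, hi₀⟩ : ∃ i₀, cf i₀ g ≠ 0 := by
      by_contra hcon
      push_neg at hcon
      exact hg (by ext i; simpa using hcon i)
    have hnorm : 0 < ‖cf i₀ g‖ := norm_pos_iff.mpr hi₀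
    obtain ⟨k, hk⟩ := exists_pow_lt_of_lt_one hnorm (inv_lt_one_of_one_lt₀ hp1)
    refine ⟨k, fun hdvd => ?_⟩
    have := norm_le_of_dvd ((C_pow_dvd_iff k g).mp hdvd i₀)
    linarith
  have hk₀pos : 0 < Nat.find hQ := by
    rcases Nat.eq_zero_or_pos (Nat.find hQ) with h | h
    · exfalso
      have := Nat.find_spec hQ
      rw [h] at this
      exact this (by simpa using one_dvd g)
    · exact h
  have hdvd : (p : Λ) ^ (Nat.find hQ - 1) ∣ g := by
    by_contra hcon
    exact Nat.find_min hQ (Nat.sub_lt hk₀pos one_pos) hcon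
  obtain ⟨g', hg'⟩ := hdvd
  refine ⟨Nat.find hQ - 1, g', hg', fun hpd => ?_⟩
  refine Nat.find_spec hQ ?_
  obtain ⟨t, ht⟩ := hpd
  refine ⟨t, ?_⟩
  calc g = (p : Λ) ^ (Nat.find hQ - 1) * g' := hg'
    _ = (p : Λ) ^ (Nat.find hQ - 1) * ((p : Λ) * t) := by rw [ht]
    _ = (p : Λ) ^ Nat.find hQ * t := by
        rw [← mul_assoc, mul_comm ((p : Λ) ^ (Nat.find hQ - 1)) (p : Λ), ← pow_succ',
          Nat.sub_add_cancel hk₀pos]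

lemma mem_of_mul_pow_p_mem {P : Ideal Λ} (hP : P.IsPrime) (hp : (p : Λ) ∉ P)
    {a : ℕ} {g : Λ} (hmem : (p : Λ) ^ a * g ∈ P) : g ∈ P := by
  rcases hP.mem_or_mem hmem with h | h
  · exact absurd (hP.mem_of_pow_mem a h) hp
  · exact h

/-- Every prime ideal containing two coprime elements (one of them nonzero) contains `p`. -/
lemma p_mem_prime {f h : Λ} (hf : f ≠ 0) (hcop : IsRelPrime f h)
    (P : Ideal Λ) (hP : P.IsPrime) (hfP : f ∈ P) (hhP : h ∈ P) : (p : Λ) ∈ P := by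
  classical
  by_contra hp
  -- a member of P not divisible by p
  obtain ⟨a, f', hff', hf'⟩ := strip hf
  have hf'P : f' ∈ P := mem_of_mul_pow_p_mem hP hp (hff' ▸ hfP)
  -- minimal index of a unit coefficient among members of P
  have hT : ∃ n, ∃ g ∈ P, IsUnit (cf n g) := by
    obtain ⟨i, hi⟩ := exists_unit_coeff hf'
    exact ⟨i, f', hf'P, hi⟩
  set n₀ := Nat.find hT with hn₀
  obtain ⟨g, hgP, hgU⟩ := Nat.find_spec hT
  have hglow : ∀ i < n₀, ¬ IsUnit (cf i g) := fun i hi hu =>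
    Nat.find_min hT hi ⟨g, hgP, hu⟩
  -- every element of P is divisible by g
  have hdiv : ∀ t ∈ P, g ∣ t := by
    intro t ht
    obtain ⟨q, r, hqr, hr⟩ := wdiv g n₀ hgU hglow t
    by_cases hr0 : r = 0
    · exact ⟨q, by rw [hqr, hr0, add_zero, mul_comm]⟩
    exfalso
    have hrP : r ∈ P := by
      have : r = t - q * g := by rw [hqr]; ring
      rw [this]
      exact P.sub_mem ht (P.mul_mem_left q hgP)
    obtain ⟨a', r', hrr', hr'⟩ := strip hr0
    have hr'P : r' ∈ P := mem_of_mul_pow_p_mem hP hp (hrr' ▸ hrP)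
    obtain ⟨i₁, hi₁⟩ := exists_unit_coeff hr'
    have hi₁n : i₁ < n₀ := by
      by_contra hcon
      have h0 : cf i₁ r = 0 := hr i₁ (not_lt.mp hcon)
      have : (p : ℤ_[p]) ^ a' * cf i₁ r' = 0 := by
        rw [← h0, hrr']
        have hC : (p : Λ) = PowerSeries.C (R := ℤ_[p]) (p : ℤ_[p]) := by rw [map_natCast]
        rw [hC, ← map_pow, coeff_C_mul]
      have hpne : ((p : ℤ_[p]) ^ a') ≠ 0 := by
        apply pow_ne_zero
        exact_mod_cast Nat.Prime.ne_zero (Fact.out : p.Prime)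
      have := (mul_eq_zero.mp this).resolve_left hpne
      rw [this] at hi₁
      exact hi₁.ne_zero rfl
    exact Nat.find_min hT hi₁n ⟨r', hr'P, hi₁⟩
  have hgunit : IsUnit g := hcop (hdiv f hfP) (hdiv h hhP)
  exact hP.ne_top (Ideal.eq_top_of_isUnit_mem P hgP hgunit)

lemma pow_p_mem {f h : Λ} (hf : f ≠ 0) (hcop : IsRelPrime f h) :
    ∃ k, (p : Λ) ^ k ∈ Ideal.span {f, h} := by
  have hrad : (p : Λ) ∈ (Ideal.span {f, h}).radical := by
    rw [Ideal.radical_eq_sInf]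
    rw [Submodule.mem_sInf]
    rintro P ⟨hle, hprime⟩
    exact p_mem_prime hf hcop P hprime (hle (Ideal.subset_span (Set.mem_insert _ _)))
      (hle (Ideal.subset_span (Set.mem_insert_of_mem _ rfl)))
  exact Ideal.mem_radical_iff.mp hrad


lemma pow_X_mem {f h : Λ} (hnd : ¬ (p : Λ) ∣ f) {k : ℕ}
    (hk : (p : Λ) ^ k ∈ Ideal.span {f, h}) :
    ∃ m, (X : Λ) ^ m ∈ Ideal.span {f, h} := by
  classical
  set I := Ideal.span ({f, h} : Set Λ) with hI
  have hfI : f ∈ I := Ideal.subset_span (Set.mem_insert _ _)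
  have hex : ∃ i, IsUnit (cf i f) := exists_unit_coeff hnd
  have hnU : IsUnit (cf (Nat.find hex) f) := Nat.find_spec hex
  set n := Nat.find hex with hn
  have hUnit : IsUnit (sh n f) := by
    rw [PowerSeries.isUnit_iff_constantCoeff, ← coeff_zero_eq_constantCoeff_apply, coeff_sh,
      Nat.add_zero]
    exact hnU
  have hplo : (p : Λ) ∣ lo n f := by
    rw [← pow_one (p : Λ), C_pow_dvd_iff]
    intro i
    rw [pow_one, coeff_lo]
    split
    · exact pdvd_of_not_isUnit (Nat.find_min hex (by assumption))
    · exact dvd_zero _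
  obtain ⟨w, hw⟩ := hplo
  refine ⟨n * k, ?_⟩
  rw [← Ideal.Quotient.eq_zero_iff_mem]
  have hfq : Ideal.Quotient.mk I f = 0 := Ideal.Quotient.eq_zero_iff_mem.mpr hfI
  have hpq : Ideal.Quotient.mk I ((p : Λ) ^ k) = 0 := Ideal.Quotient.eq_zero_iff_mem.mpr hk
  have hdec : X ^ n * sh n f = f - (p : Λ) * w := by
    rw [← hw]
    linear_combination - decomp n f
  have key : Ideal.Quotient.mk I (X ^ n) * Ideal.Quotient.mk I (sh n f)
      = - (Ideal.Quotient.mk I (p : Λ) * Ideal.Quotient.mk I w) := by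
    rw [← map_mul, hdec, map_sub, hfq, map_mul, zero_sub]
  have hz : (Ideal.Quotient.mk I (X ^ n)) ^ k * (Ideal.Quotient.mk I (sh n f)) ^ k = 0 := by
    rw [← mul_pow, key]
    have h0 : (Ideal.Quotient.mk I (p : Λ)) ^ k = 0 := by rw [← map_pow]; exact hpq
    calc (- (Ideal.Quotient.mk I (p : Λ) * Ideal.Quotient.mk I w)) ^ k
        = (- Ideal.Quotient.mk I w) ^ k * (Ideal.Quotient.mk I (p : Λ)) ^ k := by ring
      _ = 0 := by rw [h0, mul_zero]
  have hU : IsUnit ((Ideal.Quotient.mk I (sh n f)) ^ k) :=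
    (hUnit.map (Ideal.Quotient.mk I)).pow k
  have := (hU.mul_left_eq_zero).mp hz
  rw [← map_pow, ← pow_mul] at this
  exact this

lemma finite_quot {I : Ideal Λ} {k m : ℕ} (hk : (p : Λ) ^ k ∈ I) (hm : (X : Λ) ^ m ∈ I) :
    Finite (Λ ⧸ I) := by
  classical
  have hsurj : Function.Surjective
      (fun c : Fin m → Fin (p ^ k) => Ideal.Quotient.mk I
        (PowerSeries.mk fun i => if hi : i < m then ((c ⟨i, hi⟩ : ℕ) : ℤ_[p]) else 0)) := by
    intro y
    obtain ⟨g, rfl⟩ := Ideal.Quotient.mk_surjective y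
    refine ⟨fun i => ⟨(cf i g).appr k, PadicInt.appr_lt _ _⟩, ?_⟩
    set S : Λ := PowerSeries.mk fun i => if hi : i < m then (((cf i g).appr k : ℕ) : ℤ_[p]) else 0
      with hS
    have h1 : (p : Λ) ^ k ∣ (S - lo m g) := by
      rw [C_pow_dvd_iff]
      intro i
      rw [map_sub, hS, coeff_mk, coeff_lo]
      by_cases hi : i < m
      · rw [dif_pos hi, if_pos hi]
        have := PadicInt.appr_spec k (cf i g)
        rw [Ideal.mem_span_singleton] at this
        simpa using (dvd_neg.mpr this)
      · rw [dif_neg hi, if_neg hi, sub_zero]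
        exact dvd_zero _
    obtain ⟨t, ht⟩ := h1
    have h2 : S - g ∈ I := by
      have hg := decomp m g
      have : S - g = (p : Λ) ^ k * t - X ^ m * sh m g := by
        rw [← ht]
        linear_combination - hg
      rw [this]
      exact I.sub_mem (Ideal.mul_mem_right t I hk) (Ideal.mul_mem_right (sh m g) I hm)
    exact (Ideal.Quotient.eq).mpr h2
  exact Finite.of_surjective _ hsurj

lemma main_case {f h : Λ} (hf : f ≠ 0) (hcop : IsRelPrime f h) (hnd : ¬ (p : Λ) ∣ f) :
    Finite (Λ ⧸ Ideal.span {f, h}) := by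
  obtain ⟨k, hk⟩ := pow_p_mem hf hcop
  obtain ⟨m, hm⟩ := pow_X_mem hnd hk
  exact finite_quot hk hm

end Stmt7

/-- The Iwasawa algebra `Λ = ℤ_p[[X]]`. -/
noncomputable abbrev Lam (p : ℕ) [Fact p.Prime] : Type := PowerSeries ℤ_[p]

/-- Let `f, h ∈ Λ = ℤ_p[[X]]` be nonzero elements with no common irreducible factor,
i.e. coprime in the UFD `Λ` (every common divisor is a unit).  Then `Λ/(f, h)` is
finite. -/
theorem stmt7 (p : ℕ) [Fact p.Prime] (f h : Lam p) (hf : f ≠ 0) (hh : h ≠ 0)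
    (hcop : IsRelPrime f h) :
    Finite ((Lam p) ⧸ Ideal.span {f, h}) := by
  have hpnu : ¬ IsUnit ((p : Lam p)) := by
    rw [PowerSeries.isUnit_iff_constantCoeff]
    intro hc
    have he : (PowerSeries.constantCoeff (R := ℤ_[p])) ((p : Lam p)) = (p : ℤ_[p]) := by
      rw [map_natCast]
    rw [he] at hc
    have := PadicInt.isUnit_iff.mp hc
    rw [PadicInt.norm_p] at this
    have hp1 : (1 : ℝ) < (p : ℝ) := by exact_mod_cast (Fact.out : p.Prime).one_lt
    have : ((p : ℝ))⁻¹ < 1 := inv_lt_one_of_one_lt₀ hp1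
    linarith [PadicInt.norm_p (p := p)]
  by_cases hpf : (p : Lam p) ∣ f
  · by_cases hph : (p : Lam p) ∣ h
    · exact absurd (hcop hpf hph) hpnu
    · rw [Ideal.span_pair_comm]
      exact Stmt7.main_case hh hcop.symm hph
  · exact Stmt7.main_case hf hcop hpf
end

section
/- If g ∈ ℤ_p[X] is a distinguished polynomial of degree d, then the quotient Λ/(g) is a free ℤ_p-module of rank d, with basis the images of 1, X, …, X^{d−1}. -/
open PowerSeries

/-- A distinguished polynomial: monic, with all non-leading coefficients divisible by `p`. -/
def IsDistinguished (p : ℕ) [Fact p.Prime] (g : Polynomial ℤ_[p]) : Prop :=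
  g.Monic ∧ ∀ i < g.natDegree, (p : ℤ_[p]) ∣ g.coeff i

section Aux

variable (p : ℕ) [Fact p.Prime]

lemma smod_iff (k : ℕ) (x y : ℤ_[p]) :
    x ≡ y [SMOD ((IsLocalRing.maximalIdeal ℤ_[p])^k • ⊤ : Submodule ℤ_[p] ℤ_[p])] ↔
      (p:ℤ_[p])^k ∣ (x - y) := by
  rw [SModEq.sub_mem, smul_eq_mul, Ideal.mul_top, PadicInt.maximalIdeal_eq_span_p,
    Ideal.span_singleton_pow, Ideal.mem_span_singleton]

lemma eq_zero_of_dvd (x : ℤ_[p]) (h : ∀ k, (p:ℤ_[p])^k ∣ x) : x = 0 := by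
  have := (inferInstance : IsAdicComplete (IsLocalRing.maximalIdeal ℤ_[p]) ℤ_[p]).toIsHausdorff
  refine this.haus x fun k => ?_
  rw [smod_iff]; simpa using h k

lemma coeff_mul_dvd {k : ℕ} (c q : Lam p) (hc : ∀ n, (p:ℤ_[p]) ∣ coeff n c)
    (hq : ∀ n, (p:ℤ_[p])^k ∣ coeff n q) (n : ℕ) :
    (p:ℤ_[p])^(k+1) ∣ coeff n (c * q) := by
  rw [coeff_mul]
  refine Finset.dvd_sum fun x _ => ?_
  rw [pow_succ']
  exact mul_dvd_mul (hc x.1) (hq x.2)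

/-- Uniqueness part of Weierstrass division. -/
lemma q_eq_zero (d : ℕ) (c q : Lam p) (hc : ∀ n, (p:ℤ_[p]) ∣ coeff n c)
    (h : ∀ n, coeff n q + coeff (n+d) (c*q) = 0) : q = 0 := by
  have key : ∀ k n, (p:ℤ_[p])^k ∣ coeff n q := by
    intro k
    induction k with
    | zero => simp
    | succ k ih =>
      intro n
      have hq : coeff n q = -(coeff (n+d) (c*q)) :=
        eq_neg_of_add_eq_zero_left (h n)
      rw [hq]
      exact (coeff_mul_dvd p c q hc ih (n+d)).neg_right
  ext n
  simpa using eq_zero_of_dvd p _ fun k => key k n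

/-- Successive approximations to the quotient in Weierstrass division. -/
noncomputable def seqQ (d : ℕ) (c f : Lam p) : ℕ → Lam p
  | 0 => 0
  | k+1 => PowerSeries.mk fun n =>
      coeff (n+d) f - coeff (n+d) (c * seqQ d c f k)

lemma coeff_seqQ_succ (d : ℕ) (c f : Lam p) (k n : ℕ) :
    coeff n (seqQ p d c f (k+1)) =
      coeff (n+d) f - coeff (n+d) (c * seqQ p d c f k) := by
  simp [seqQ]

lemma seqQ_diff (d : ℕ) (c f : Lam p) (hc : ∀ n, (p:ℤ_[p]) ∣ coeff n c) :
    ∀ k n, (p:ℤ_[p])^k ∣ coeff n (seqQ p d c f (k+1)) - coeff n (seqQ p d c f k) := by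
  intro k
  induction k with
  | zero => simp
  | succ k ih =>
    intro n
    have : coeff n (seqQ p d c f (k+2)) - coeff n (seqQ p d c f (k+1)) =
        -(coeff (n+d) (c * (seqQ p d c f (k+1) - seqQ p d c f k))) := by
      rw [coeff_seqQ_succ, coeff_seqQ_succ, mul_sub, map_sub]
      ring
    rw [this]
    refine (coeff_mul_dvd p c _ hc (fun m => ?_) (n+d)).neg_right
    rw [map_sub]
    exact ih m

lemma seqQ_cauchy (d : ℕ) (c f : Lam p) (hc : ∀ n, (p:ℤ_[p]) ∣ coeff n c) :
    ∀ m n, m ≤ n → ∀ j,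
      (p:ℤ_[p])^m ∣ coeff j (seqQ p d c f n) - coeff j (seqQ p d c f m) := by
  intro m n hmn
  induction n, hmn using Nat.le_induction with
  | base => simp
  | succ n hmn ih =>
    intro j
    have h1 := seqQ_diff p d c f hc n j
    have h2 := ih j
    have : coeff j (seqQ p d c f (n+1)) - coeff j (seqQ p d c f m) =
        (coeff j (seqQ p d c f (n+1)) - coeff j (seqQ p d c f n)) +
        (coeff j (seqQ p d c f n) - coeff j (seqQ p d c f m)) := by ring
    rw [this]
    exact dvd_add (dvd_trans (pow_dvd_pow _ hmn) h1) h2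

/-- Existence part of Weierstrass division. -/
lemma division (d : ℕ) (c f : Lam p) (hc : ∀ n, (p:ℤ_[p]) ∣ coeff n c) :
    ∃ Q : Lam p, ∀ n,
      coeff (n+d) f = coeff n Q + coeff (n+d) (c * Q) := by
  have hL : ∀ j : ℕ, ∃ L : ℤ_[p], ∀ k,
      (p:ℤ_[p])^k ∣ coeff j (seqQ p d c f k) - L := by
    intro j
    obtain ⟨L, hL⟩ := IsPrecomplete.prec
      (inferInstance : IsAdicComplete (IsLocalRing.maximalIdeal ℤ_[p]) ℤ_[p]).toIsPrecomplete
      (f := fun k => coeff j (seqQ p d c f k))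
      (fun {m n} hmn => (smod_iff p m _ _).mpr
        (by simpa [neg_sub] using (seqQ_cauchy p d c f hc m n hmn j).neg_right))
    exact ⟨L, fun k => (smod_iff p k _ _).mp (hL k)⟩
  choose L hLspec using hL
  refine ⟨PowerSeries.mk L, fun n => ?_⟩
  set Q : Lam p := PowerSeries.mk L with hQdef
  have hQcoeff : ∀ j, coeff j Q = L j := fun j => coeff_mk j L
  rw [← sub_eq_zero]
  refine eq_zero_of_dvd p _ fun k => ?_
  have split : coeff (n+d) f - (coeff n Q + coeff (n+d) (c * Q)) =
      (coeff n (seqQ p d c f (k+1)) - coeff n Q) +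
      (coeff (n+d) (c * seqQ p d c f k) - coeff (n+d) (c * Q)) := by
    rw [coeff_seqQ_succ]; ring
  rw [split]
  refine dvd_add ?_ ?_
  · exact dvd_trans (pow_dvd_pow _ (Nat.le_succ k)) (hQcoeff n ▸ hLspec n (k+1))
  · have : coeff (n+d) (c * seqQ p d c f k) - coeff (n+d) (c * Q) =
        coeff (n+d) (c * (seqQ p d c f k - Q)) := by
      rw [mul_sub, map_sub]
    rw [this]
    refine dvd_trans (pow_dvd_pow _ (Nat.le_succ k)) ?_
    refine coeff_mul_dvd p c _ hc (fun m => ?_) (n+d)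
    rw [map_sub, hQcoeff m]
    exact hLspec m k

lemma coeff_fin_sum (d : ℕ) (a : Fin d → ℤ_[p]) (n : ℕ) :
    coeff n (∑ i : Fin d, a i • (X : Lam p)^(i:ℕ)) =
      if h : n < d then a ⟨n, h⟩ else 0 := by
  rw [map_sum]
  by_cases hn : n < d
  · rw [dif_pos hn, Finset.sum_eq_single (⟨n, hn⟩ : Fin d)]
    · simp [coeff_X_pow]
    · intro i _ hi
      have : n ≠ (i : ℕ) := fun h => hi (by exact Fin.ext h.symm)
      simp [coeff_X_pow, this]
    · simp
  · rw [dif_neg hn]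
    refine Finset.sum_eq_zero fun i _ => ?_
    have : n ≠ (i : ℕ) := fun h => hn (h ▸ i.isLt)
    simp [coeff_X_pow, this]

lemma eq_fin_sum (d : ℕ) (h : Lam p) (hh : ∀ m, d ≤ m → coeff m h = 0) :
    h = ∑ i : Fin d, (coeff (i:ℕ) h) • (X : Lam p)^(i:ℕ) := by
  ext n
  rw [coeff_fin_sum]
  by_cases hn : n < d
  · rw [dif_pos hn]
  · rw [dif_neg hn]
    exact hh n (le_of_not_gt hn)

end Aux

set_option maxHeartbeats 2000000 in
/-- If `g ∈ ℤ_p[X]` is a distinguished polynomial of degree `d`, then `Λ/(g)` is a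
free `ℤ_[p]`-module of rank `d`, with basis the images of `1, X, …, X^(d-1)`. -/
theorem stmt8 (p : ℕ) [Fact p.Prime] (g : Polynomial ℤ_[p]) (d : ℕ)
    (hdist : IsDistinguished p g) (hdeg : g.natDegree = d) :
    Module.Free ℤ_[p] ((Lam p) ⧸ Ideal.span {(g : PowerSeries ℤ_[p])}) ∧
    Module.finrank ℤ_[p] ((Lam p) ⧸ Ideal.span {(g : PowerSeries ℤ_[p])}) = d ∧
    ∃ b : Module.Basis (Fin d) ℤ_[p] ((Lam p) ⧸ Ideal.span {(g : PowerSeries ℤ_[p])}),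
      ∀ i : Fin d,
        b i = Ideal.Quotient.mk (Ideal.span {(g : PowerSeries ℤ_[p])})
          (PowerSeries.X ^ (i : ℕ)) := by
  obtain ⟨hg, hgc⟩ := hdist
  set G : Lam p := (g : PowerSeries ℤ_[p]) with hGdef
  set I : Ideal (Lam p) := Ideal.span {G} with hIdef
  set c : Lam p := G - X^d with hcdef
  -- c has all coefficients divisible by p
  have hc : ∀ n, (p:ℤ_[p]) ∣ coeff n c := by
    intro n
    have hcn : coeff n c = g.coeff n - (if n = d then 1 else 0) := by
      rw [hcdef, map_sub, Polynomial.coeff_coe, coeff_X_pow]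
    rcases lt_trichotomy n d with h | h | h
    · rw [hcn, if_neg (ne_of_lt h), sub_zero]
      exact hgc n (hdeg ▸ h)
    · rw [hcn, if_pos h, h]
      have : g.coeff d = 1 := by
        rw [← hdeg]; exact hg
      rw [this, sub_self]
      exact dvd_zero _
    · rw [hcn, if_neg (ne_of_gt h)]
      have : g.coeff n = 0 := Polynomial.coeff_eq_zero_of_natDegree_lt (hdeg ▸ h)
      rw [this, zero_sub]
      simp
  -- key multiplicative identity
  have hmul : ∀ (Q : Lam p) (n : ℕ),
      coeff (n+d) (Q * G) = coeff n Q + coeff (n+d) (c * Q) := by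
    intro Q n
    have hG : G = X^d + c := by rw [hcdef]; ring
    rw [hG, mul_add, map_add, coeff_mul_X_pow Q d n, mul_comm Q c]
  -- the candidate basis vectors
  set v : Fin d → (Lam p ⧸ I) := fun i => Ideal.Quotient.mk I (X^(i:ℕ)) with hvdef
  set π : Lam p →ₗ[ℤ_[p]] (Lam p ⧸ I) := (Ideal.Quotient.mkₐ ℤ_[p] I).toLinearMap with hπdef
  have hπ : ∀ x : Lam p, π x = Ideal.Quotient.mk I x := fun x => by
    rw [hπdef, AlgHom.toLinearMap_apply, Ideal.Quotient.mkₐ_eq_mk]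
  -- surjectivity: every element of the quotient is a combination of the v i
  have hsurj : ∀ f : Lam p, ∃ a : Fin d → ℤ_[p],
      Ideal.Quotient.mk I f = ∑ i : Fin d, a i • v i := by
    intro f
    obtain ⟨Q, hQ⟩ := division p d c f hc
    set r : Lam p := f - Q * G with hrdef
    have hr : ∀ m, d ≤ m → coeff m r = 0 := by
      intro m hm
      obtain ⟨n, rfl⟩ : ∃ n, m = n + d := ⟨m - d, (Nat.sub_add_cancel hm).symm⟩
      rw [hrdef, map_sub, hmul Q n, ← hQ n]
      ring
    refine ⟨fun i => coeff (i:ℕ) r, ?_⟩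
    have hfr : f = Q * G + r := by rw [hrdef]; ring
    have hrsum := eq_fin_sum p d r hr
    calc Ideal.Quotient.mk I f = π (Q * G + r) := by rw [← hfr, hπ]
      _ = π (Q * G) + π r := map_add _ _ _
      _ = 0 + π r := by
          rw [hπ, Ideal.Quotient.eq_zero_iff_mem.mpr
            (Ideal.mem_span_singleton'.mpr ⟨Q, rfl⟩)]
      _ = π (∑ i : Fin d, (coeff (i:ℕ) r) • (X : Lam p)^(i:ℕ)) := by
          rw [zero_add, ← hrsum]
      _ = ∑ i : Fin d, (coeff (i:ℕ) r) • v i := by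
          rw [map_sum]
          refine Finset.sum_congr rfl fun i _ => ?_
          rw [map_smul, hπ, hvdef]
  -- linear independence
  have hli : LinearIndependent ℤ_[p] v := by
    rw [Fintype.linearIndependent_iff]
    intro a hsum i
    set r : Lam p := ∑ i : Fin d, a i • (X : Lam p)^(i:ℕ) with hrdef
    have hπr : π r = 0 := by
      rw [hrdef, map_sum]
      rw [show (0 : Lam p ⧸ I) = ∑ i : Fin d, a i • v i from hsum.symm]
      refine Finset.sum_congr rfl fun i _ => ?_
      rw [map_smul, hπ, hvdef]
    have hrmem : r ∈ I := by
      rwa [hπ, Ideal.Quotient.eq_zero_iff_mem] at hπr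
    obtain ⟨Q, hQ⟩ := Ideal.mem_span_singleton'.mp hrmem
    have hrhigh : ∀ n, coeff (n+d) r = 0 := by
      intro n
      rw [hrdef, coeff_fin_sum, dif_neg (by omega)]
    have hQ0 : Q = 0 := by
      refine q_eq_zero p d c Q hc fun n => ?_
      rw [← hmul Q n, hQ, hrhigh n]
    have hr0 : r = 0 := by rw [← hQ, hQ0, zero_mul]
    have := coeff_fin_sum p d a (i : ℕ)
    rw [← hrdef, hr0, map_zero, dif_pos i.isLt] at this
    simpa using this.symm
  -- spanning
  have hsp : ⊤ ≤ Submodule.span ℤ_[p] (Set.range v) := by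
    intro x _
    obtain ⟨f, rfl⟩ := Ideal.Quotient.mk_surjective x
    obtain ⟨a, ha⟩ := hsurj f
    rw [ha]
    exact Submodule.sum_mem _ fun i _ =>
      Submodule.smul_mem _ _ (Submodule.subset_span ⟨i, rfl⟩)
  set b : Module.Basis (Fin d) ℤ_[p] (Lam p ⧸ I) := Module.Basis.mk hli hsp with hbdef
  refine ⟨Module.Free.of_basis b, ?_, ⟨b, fun i => ?_⟩⟩
  · rw [Module.finrank_eq_card_basis b, Fintype.card_fin]
  · rw [hbdef, Module.Basis.mk_apply]
end
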